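/- Let n be a positive integer and let s = (s₁, s₂) and t = (t₁, t₂) be two elements of order n in the group ℂ* × ℂ* (product of two copies of the multiplicative group of nonzero complex numbers). Then there exists a matrix M in SL(2, ℤ), with entries a = M₀₀, b = M₀₁, c = M₁₀, d = M₁₁, such that (s₁^a · s₂^b, s₁^c · s₂^d) = (t₁, t₂). -/

import Mathlib

/-- Key arithmetic lemma: a vector `(p,q)` with `gcd(p,q,n)=1` can be moved to `(1,0)` mod `n`
by an integer matrix of determinant 1. -/
lemma exists_SL2_to_one_zero (n : ℕ) (p q : ℤ)
    (h : Nat.gcd (Int.gcd p q) n = 1) :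
    ∃ a b c d : ℤ, a * d - b * c = 1 ∧ (n:ℤ) ∣ (a*p + b*q - 1) ∧ (n:ℤ) ∣ (c*p + d*q) := by
  by_cases hg : Int.gcd p q = 0
  · have hn1 : n = 1 := by simpa [hg] using h
    exact ⟨1, 0, 0, 1, by ring, by simp [hn1], by simp [hn1]⟩
  · set g : ℕ := Int.gcd p q with hgdef
    obtain ⟨p', hp'⟩ : (g:ℤ) ∣ p := Int.gcd_dvd_left p q
    obtain ⟨q', hq'⟩ : (g:ℤ) ∣ q := Int.gcd_dvd_right p q
    set A₀ : ℤ := Int.gcdA p q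
    set B₀ : ℤ := Int.gcdB p q
    have hBez : (g:ℤ) = p * A₀ + q * B₀ := Int.gcd_eq_gcd_ab p q
    have hgz : (g:ℤ) ≠ 0 := by exact_mod_cast hg
    have h1 : p' * A₀ + q' * B₀ = 1 := by
      have : (g:ℤ) * (p' * A₀ + q' * B₀) = (g:ℤ) * 1 := by
        rw [hp', hq'] at hBez; linarith [hBez]
      exact mul_left_cancel₀ hgz this
    have hco : IsCoprime (g:ℤ) (n:ℤ) := by
      rw [Int.isCoprime_iff_gcd_eq_one, Int.gcd_natCast_natCast]
      exact h
    obtain ⟨x, y, hxy⟩ := hco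
    have hco2 : IsCoprime x (n:ℤ) := ⟨(g:ℤ), y, by linarith [hxy]⟩
    obtain ⟨d, e, hde⟩ := hco2
    refine ⟨x*A₀ - (-e)*q', x*B₀ + (-e)*p', (n:ℤ)*A₀ - d*q', (n:ℤ)*B₀ + d*p', ?_, ?_, ?_⟩
    · linear_combination (x*d - (-e)*(n:ℤ)) * h1 + (hde)
    · exact ⟨-y, by linear_combination (x*(g:ℤ)) * h1 + hxy + (x*A₀ + e*q') * hp' + (x*B₀ - e*p') * hq'⟩
    · exact ⟨(g:ℤ), by linear_combination ((n:ℤ)*(g:ℤ)) * h1 + ((n:ℤ)*A₀ - d*q') * hp' + ((n:ℤ)*B₀ + d*p') * hq'⟩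

/-- If `s = (ζ^p, ζ^q)` has order `n`, where `ζ` has order `n`, then `gcd(p, q, n) = 1`. -/
lemma gcd_eq_one_of_orderOf_eq {G : Type*} [CommGroup G] (n : ℕ) (hn : 0 < n)
    (ζ : G) (hζ : ζ ^ n = 1) (s : G × G) (p q : ℕ)
    (h1 : ζ ^ p = s.1) (h2 : ζ ^ q = s.2) (hs : orderOf s = n) :
    Nat.gcd (Nat.gcd p q) n = 1 := by
  set g : ℕ := Nat.gcd (Nat.gcd p q) n with hgdef
  have hgn : g ∣ n := Nat.gcd_dvd_right _ _
  have hgp : g ∣ p := (Nat.gcd_dvd_left _ _).trans (Nat.gcd_dvd_left p q)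
  have hgq : g ∣ q := (Nat.gcd_dvd_left _ _).trans (Nat.gcd_dvd_right p q)
  have key : ∀ r : ℕ, g ∣ r → ζ ^ (r * (n / g)) = 1 := by
    intro r hr
    obtain ⟨r₀, hr₀⟩ := hr
    have : r * (n / g) = r₀ * n := by
      rw [hr₀, mul_comm g r₀, mul_assoc, Nat.mul_div_cancel' hgn]
    rw [this, mul_comm, pow_mul, hζ, one_pow]
  have hspow : s ^ (n / g) = 1 := by
    have e1 : (s ^ (n / g)).1 = 1 := by
      rw [Prod.pow_fst, ← h1, ← pow_mul]; exact key p hgp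
    have e2 : (s ^ (n / g)).2 = 1 := by
      rw [Prod.pow_snd, ← h2, ← pow_mul]; exact key q hgq
    exact Prod.ext e1 e2
  have hd : n ∣ n / g := by
    have := orderOf_dvd_of_pow_eq_one hspow
    rwa [hs] at this
  have heq : n / g = n := Nat.dvd_antisymm (Nat.div_dvd_of_dvd hgn) hd
  have hfin : g * n = n := by
    conv_lhs => rw [← heq]
    exact Nat.mul_div_cancel' hgn
  exact Nat.eq_of_mul_eq_mul_right hn (by rw [one_mul]; exact hfin)

lemma zpow_congr_of_dvd (ζ : ℂˣ) (n : ℕ) (h : ζ ^ n = 1) (i j : ℤ)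
    (hij : (n:ℤ) ∣ (i - j)) : ζ ^ i = ζ ^ j := by
  obtain ⟨k, hk⟩ := hij
  have : i = j + (n:ℤ) * k := by linarith
  rw [this, zpow_add, zpow_mul, zpow_natCast, h, one_zpow, mul_one]

/-- `SL(2, ℤ)` acts transitively (by monomial maps) on the elements of order `n` of the
torus `ℂ* × ℂ*`. -/
theorem SL2Z_transitive_on_order_n_torus_elements (n : ℕ) (hn : 0 < n)
    (s t : ℂˣ × ℂˣ) (hs : orderOf s = n) (ht : orderOf t = n) :
    ∃ M : Matrix.SpecialLinearGroup (Fin 2) ℤ,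
      s.1 ^ (M : Matrix (Fin 2) (Fin 2) ℤ) 0 0 * s.2 ^ (M : Matrix (Fin 2) (Fin 2) ℤ) 0 1 = t.1 ∧
      s.1 ^ (M : Matrix (Fin 2) (Fin 2) ℤ) 1 0 * s.2 ^ (M : Matrix (Fin 2) (Fin 2) ℤ) 1 1 = t.2 := by
  have hn' : n ≠ 0 := hn.ne'
  haveI : NeZero n := ⟨hn'⟩
  set ζc : ℂ := Complex.exp (2 * Real.pi * Complex.I / n) with hζcdef
  have hζ : IsPrimitiveRoot ζc n := Complex.isPrimitiveRoot_exp n hn'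
  set ζ : ℂˣ := (hζ.isUnit hn').unit with hζdef
  have hζval : (ζ : ℂ) = ζc := (hζ.isUnit hn').unit_spec
  have hζn : ζ ^ n = 1 := by
    ext
    rw [Units.val_pow_eq_pow_val, hζval, hζ.pow_eq_one, Units.val_one]
  -- components are n-th roots of unity
  have hsn : s ^ n = 1 := by rw [← hs]; exact pow_orderOf_eq_one s
  have htn : t ^ n = 1 := by rw [← ht]; exact pow_orderOf_eq_one t
  have getpow : ∀ x : ℂˣ, x ^ n = 1 → ∃ i : ℕ, ζ ^ i = x := by
    intro x hx
    have hxc : (x : ℂ) ^ n = 1 := by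
      rw [← Units.val_pow_eq_pow_val, hx, Units.val_one]
    obtain ⟨i, _, hi⟩ := hζ.eq_pow_of_pow_eq_one hxc
    exact ⟨i, by ext; rw [Units.val_pow_eq_pow_val, hζval, hi]⟩
  obtain ⟨p, hp⟩ := getpow s.1 (by rw [← Prod.pow_fst, hsn]; rfl)
  obtain ⟨q, hq⟩ := getpow s.2 (by rw [← Prod.pow_snd, hsn]; rfl)
  obtain ⟨u, hu⟩ := getpow t.1 (by rw [← Prod.pow_fst, htn]; rfl)
  obtain ⟨v, hv⟩ := getpow t.2 (by rw [← Prod.pow_snd, htn]; rfl)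
  have hgs : Nat.gcd (Int.gcd (p:ℤ) (q:ℤ)) n = 1 := by
    rw [Int.gcd_natCast_natCast]
    exact gcd_eq_one_of_orderOf_eq n hn ζ hζn s p q hp hq hs
  have hgt : Nat.gcd (Int.gcd (u:ℤ) (v:ℤ)) n = 1 := by
    rw [Int.gcd_natCast_natCast]
    exact gcd_eq_one_of_orderOf_eq n hn ζ hζn t u v hu hv ht
  obtain ⟨a, b, c, d, hdet, ⟨k1, hk1⟩, ⟨k2, hk2⟩⟩ := exists_SL2_to_one_zero n p q hgs
  obtain ⟨a', b', c', d', hdet', ⟨k3, hk3⟩, ⟨k4, hk4⟩⟩ := exists_SL2_to_one_zero n u v hgt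
  refine ⟨⟨!![d'*a - b'*c, d'*b - b'*d; a'*c - c'*a, a'*d - c'*b], ?_⟩, ?_, ?_⟩
  · rw [Matrix.det_fin_two_of]
    linear_combination (a'*d' - b'*c') * hdet + hdet'
  · show s.1 ^ (d'*a - b'*c) * s.2 ^ (d'*b - b'*d) = t.1
    rw [← hp, ← hq, ← hu, ← zpow_natCast ζ p, ← zpow_natCast ζ q, ← zpow_natCast ζ u,
      ← zpow_mul, ← zpow_mul, ← zpow_add]
    refine zpow_congr_of_dvd ζ n hζn _ _ ⟨d'*k1 - b'*k2 - d'*k3 + b'*k4, ?_⟩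
    linear_combination d'*hk1 - b'*hk2 - d'*hk3 + b'*hk4 + (u:ℤ)*hdet'
  · show s.1 ^ (a'*c - c'*a) * s.2 ^ (a'*d - c'*b) = t.2
    rw [← hp, ← hq, ← hv, ← zpow_natCast ζ p, ← zpow_natCast ζ q, ← zpow_natCast ζ v,
      ← zpow_mul, ← zpow_mul, ← zpow_add]
    refine zpow_congr_of_dvd ζ n hζn _ _ ⟨-c'*k1 + a'*k2 + c'*k3 - a'*k4, ?_⟩
    linear_combination (-c')*hk1 + a'*hk2 + c'*hk3 + (-a')*hk4 + (v:ℤ)*hdet'
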